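/- Fix integers $n_i \geq k_i \geq 1$ for $i, j \in [\ell]$ with $i \neq j$, an integer $0 \leq c$, and define $f(x) = \binom{n_i - x}{k_i}\binom{n_j - c + x}{k_j}$ for real $x$ (binomials extended via the Gamma function or falling factorials). Assume $n_i - c \geq k_i$, $n_j - c \geq k_j$, $n_i \geq 2k_i$, and $n_j \geq 2k_j$. Then $\min_{0 \leq x \leq c,\ x \in \mathbb{Z}} f(x) = \min\left\{ \binom{n_i - c}{k_i}\binom{n_j}{k_j},\ \binom{n_i}{k_i}\binom{n_j - c}{k_j} \right\}$, i.e., the minimum over integers $x \in [0, c]$ is attained at an endpoint. -/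

import Mathlib

/-- Log-concavity of binomial coefficients in the top argument. -/
lemma chooseLC (a k : ℕ) (hk : k ≤ a) :
    (a + 2).choose k * a.choose k ≤ (a + 1).choose k * (a + 1).choose k := by
  -- identities: (n+1) * n.choose k = (n+1).choose k * (n+1-k)
  have key : ∀ n : ℕ, (n + 1) * n.choose k = (n + 1).choose k * (n + 1 - k) := by
    intro n
    have h1 := Nat.add_one_mul_choose_eq n k
    have h2 := Nat.choose_succ_right_eq (n + 1) k
    rw [h1, h2]
  have h1 := key a
  have h2 : (a + 2) * (a + 1).choose k = (a + 2).choose k * (a + 2 - k) := by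
    have := key (a + 1)
    convert this using 3 <;> omega
  -- cancel positive factor (a+1)*(a+2-k)
  have hD : 0 < (a + 1) * (a + 2 - k) := by
    have : 0 < a + 2 - k := by omega
    positivity
  apply Nat.le_of_mul_le_mul_right _ hD
  have e1 : (a + 2).choose k * a.choose k * ((a + 1) * (a + 2 - k)) =
      ((a + 2).choose k * (a + 2 - k)) * (a.choose k * (a + 1)) := by ring
  have e2 : (a + 2).choose k * (a + 2 - k) = (a + 2) * (a + 1).choose k := h2.symm
  have e3 : a.choose k * (a + 1) = (a + 1).choose k * (a + 1 - k) := by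
    rw [← h1]; ring
  rw [e1, e2, e3]
  have harith : (a + 2) * (a + 1 - k) ≤ (a + 1) * (a + 2 - k) := by
    obtain ⟨m, rfl⟩ := Nat.exists_eq_add_of_le hk
    have e4 : k + m + 1 - k = m + 1 := by omega
    have e5 : k + m + 2 - k = m + 2 := by omega
    rw [e4, e5]
    nlinarith
  calc (a + 2) * (a + 1).choose k * ((a + 1).choose k * (a + 1 - k))
      = ((a + 1).choose k * (a + 1).choose k) * ((a + 2) * (a + 1 - k)) := by ring
    _ ≤ ((a + 1).choose k * (a + 1).choose k) * ((a + 1) * (a + 2 - k)) :=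
        Nat.mul_le_mul_left _ harith
    _ = (a + 1).choose k * (a + 1).choose k * ((a + 1) * (a + 2 - k)) := by ring

/-- A positive log-concave sequence on [0, c] attains its minimum at an endpoint. -/
lemma unimodalMin (F : ℕ → ℕ) (c : ℕ)
    (hpos : ∀ x, x ≤ c → 0 < F x)
    (hlc : ∀ i, i + 2 ≤ c → F i * F (i + 2) ≤ F (i + 1) * F (i + 1)) :
    ∀ x, x ≤ c → min (F c) (F 0) ≤ F x := by
  intro x hx
  rcases le_or_gt (F 0) (F x) with h | h
  · exact le_trans (min_le_right _ _) h
  · -- there is a strict decrease before x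
    have hex : ∃ j, j < x ∧ F (j + 1) < F j := by
      by_contra hc
      push_neg at hc
      have mono : ∀ j, j ≤ x → F 0 ≤ F j := by
        intro j hj
        induction j with
        | zero => exact le_rfl
        | succ n ih => exact le_trans (ih (by omega)) (hc n (by omega))
      exact absurd (mono x le_rfl) (not_le.mpr h)
    obtain ⟨j, hjx, hdec⟩ := hex
    -- F is nonincreasing from j onward
    have step : ∀ m, j ≤ m → m + 1 ≤ c → F (m + 1) ≤ F m := by
      intro m hm
      induction m, hm using Nat.le_induction with
      | base => intro _; exact hdec.le
      | succ m hm ih =>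
        intro h2
        have h1 : F (m + 1) ≤ F m := ih (by omega)
        have hlc' := hlc m h2
        have hp : 0 < F (m + 1) := hpos _ (by omega)
        have : F (m + 1) * F (m + 2) ≤ F (m + 1) * F (m + 1) := by
          calc F (m + 1) * F (m + 2) ≤ F m * F (m + 2) :=
                Nat.mul_le_mul_right _ h1
            _ ≤ F (m + 1) * F (m + 1) := hlc'
        exact Nat.le_of_mul_le_mul_left this hp
    have chain : ∀ m, x ≤ m → m ≤ c → F m ≤ F x := by
      intro m hm
      induction m, hm using Nat.le_induction with
      | base => intro _; exact le_rfl
      | succ m hm ih =>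
        intro hmc
        exact le_trans (step m (by omega) (by omega)) (ih (by omega))
    exact le_trans (min_le_left _ _) (chain c hx le_rfl)

theorem stmt17 (n₁ n₂ k₁ k₂ c : ℕ) (hk₁ : 1 ≤ k₁) (hk₂ : 1 ≤ k₂)
    (h₁ : k₁ + c ≤ n₁) (h₂ : k₂ + c ≤ n₂) (h₃ : 2 * k₁ ≤ n₁) (h₄ : 2 * k₂ ≤ n₂) :
    IsLeast {v : ℕ | ∃ x : ℕ, x ≤ c ∧ v = (n₁ - x).choose k₁ * (n₂ - c + x).choose k₂}
      (min ((n₁ - c).choose k₁ * n₂.choose k₂) (n₁.choose k₁ * (n₂ - c).choose k₂)) := by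
  set F : ℕ → ℕ := fun x => (n₁ - x).choose k₁ * (n₂ - c + x).choose k₂ with hF
  have hFc : F c = (n₁ - c).choose k₁ * n₂.choose k₂ := by
    have : n₂ - c + c = n₂ := by omega
    simp [hF, this]
  have hF0 : F 0 = n₁.choose k₁ * (n₂ - c).choose k₂ := by simp [hF]
  constructor
  · rcases le_total ((n₁ - c).choose k₁ * n₂.choose k₂)
        (n₁.choose k₁ * (n₂ - c).choose k₂) with h | h
    · exact ⟨c, le_rfl, by rw [min_eq_left h, ← hFc]⟩
    · exact ⟨0, Nat.zero_le _, by rw [min_eq_right h, ← hF0]⟩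
  · rintro v ⟨x, hx, rfl⟩
    rw [← hFc, ← hF0]
    apply unimodalMin F c
    · intro y hy
      exact Nat.mul_pos (Nat.choose_pos (by omega)) (Nat.choose_pos (by omega))
    · intro i hi
      have hka : k₁ ≤ n₁ - (i + 2) := by omega
      have hkb : k₂ ≤ n₂ - c + i := by omega
      set a := n₁ - (i + 2) with ha
      set b := n₂ - c + i with hb
      have e1 : n₁ - i = a + 2 := by omega
      have e2 : n₁ - (i + 1) = a + 1 := by omega
      have e3 : n₂ - c + (i + 1) = b + 1 := by omega
      have e4 : n₂ - c + (i + 2) = b + 2 := by omega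
      simp only [hF, e1, e2, e3, e4]
      have hA := chooseLC a k₁ hka
      have hB := chooseLC b k₂ hkb
      calc (a + 2).choose k₁ * b.choose k₂ * (a.choose k₁ * (b + 2).choose k₂)
          = ((a + 2).choose k₁ * a.choose k₁) * ((b + 2).choose k₂ * b.choose k₂) := by
            ring
        _ ≤ ((a + 1).choose k₁ * (a + 1).choose k₁) *
              ((b + 1).choose k₂ * (b + 1).choose k₂) := Nat.mul_le_mul hA hB
        _ = (a + 1).choose k₁ * (b + 1).choose k₂ *
              ((a + 1).choose k₁ * (b + 1).choose k₂) := by ring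
    · exact hx
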